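/- Fix q ∈ [−6, −4) and set β := 32/((2 − q)(4 + q)²) (so that β > 0), and define V₂(s) := 4·cos((1/3)·arccos(1 − 2/(s⁶β)) − 4π/3) for s ≥ 1. Then, as s → ∞, V₂(s) + 2 + √(16/(3β))·s⁻³ = O(s⁻⁶). In particular V₂(s) → −2 as s → ∞. -/

import Mathlib

open Filter Asymptotics Real


set_option maxHeartbeats 1000000 in
lemma key_aux (x : ℝ) (hx0 : 0 < x) (hx : x ≤ 1/8) :
    |4 * Real.cos (Real.arccos (1 - x) / 3 - 4 * Real.pi / 3) + 2
      + (4 / Real.sqrt 3) * Real.sqrt (x / 2)| ≤ 2 * x := by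
  have h3 : Real.sqrt 3 * Real.sqrt 3 = 3 := Real.mul_self_sqrt (by norm_num)
  have h3pos : 0 < Real.sqrt 3 := Real.sqrt_pos.2 (by norm_num)
  set φ := Real.arccos (1 - x) with hφdef
  have h1 : (-1 : ℝ) ≤ 1 - x := by linarith
  have h2 : 1 - x ≤ 1 := by linarith
  have hcos : Real.cos φ = 1 - x := Real.cos_arccos h1 h2
  have hφ0 : 0 < φ := Real.arccos_pos.2 (by linarith)
  have hφπ : φ ≤ π := Real.arccos_le_pi _
  have hπ0 : 0 < π := Real.pi_pos
  -- sin(φ/2) = √(x/2)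
  have hs2 : Real.sin (φ / 2) = Real.sqrt (x / 2) := by
    have h := Real.abs_sin_half φ
    rw [hcos, abs_of_nonneg (Real.sin_nonneg_of_nonneg_of_le_pi (by linarith) (by linarith))] at h
    rw [h]; norm_num
  -- φ ≤ π √(x/2)
  have hjordan : 2 / π * (φ / 2) ≤ Real.sin (φ / 2) :=
    Real.mul_le_sin (by linarith) (by linarith)
  have hφle : φ ≤ π * Real.sqrt (x / 2) := by
    rw [hs2] at hjordan
    have h := mul_le_mul_of_nonneg_left hjordan hπ0.le
    have he : π * (2 / π * (φ / 2)) = φ := by field_simp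
    rw [he] at h; exact h
  have hsq : Real.sqrt (x / 2) ≤ 1 / 4 := by
    rw [show (1 : ℝ)/4 = Real.sqrt ((1/4)^2) from (Real.sqrt_sq (by norm_num)).symm]
    apply Real.sqrt_le_sqrt; nlinarith
  have hπ4 : π ≤ 4 := Real.pi_le_four
  have hφ1 : φ ≤ 1 := by nlinarith [Real.sqrt_nonneg (x/2)]
  have hφsq : φ ^ 2 ≤ 8 * x := by
    have hsx : Real.sqrt (x/2) ^ 2 = x / 2 := Real.sq_sqrt (by linarith)
    have hπsq : π ^ 2 ≤ 16 := by nlinarith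
    have hmul : φ * φ ≤ (π * Real.sqrt (x/2)) * (π * Real.sqrt (x/2)) :=
      mul_le_mul hφle hφle hφ0.le (mul_nonneg hπ0.le (Real.sqrt_nonneg (x/2)))
    have hrhs : (π * Real.sqrt (x/2)) * (π * Real.sqrt (x/2)) = π ^ 2 * (x / 2) := by
      calc (π * Real.sqrt (x/2)) * (π * Real.sqrt (x/2)) = π ^ 2 * (Real.sqrt (x/2) ^ 2) := by ring
      _ = π ^ 2 * (x / 2) := by rw [hsx]
    nlinarith [hmul, hrhs, hπsq, hx0, sq_nonneg π]
  -- trig split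
  have hc43 : Real.cos (4 * π / 3) = -(1/2) := by
    rw [show 4 * π / 3 = π + π / 3 by ring, Real.cos_add, Real.cos_pi, Real.sin_pi,
      Real.cos_pi_div_three]; ring
  have hsin43 : Real.sin (4 * π / 3) = -(Real.sqrt 3 / 2) := by
    rw [show 4 * π / 3 = π + π / 3 by ring, Real.sin_add, Real.cos_pi, Real.sin_pi,
      Real.sin_pi_div_three]; ring
  have hsplit : 4 * Real.cos (φ / 3 - 4 * π / 3)
      = -2 * Real.cos (φ / 3) - 2 * Real.sqrt 3 * Real.sin (φ / 3) := by
    rw [Real.cos_sub, hc43, hsin43]; ring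
  set a := φ / 3 with ha
  have ha0 : 0 < a := by positivity
  have ha1 : a ≤ 1 := by rw [ha]; linarith
  have hb0 : 0 < φ / 2 := by positivity
  have hb1 : φ / 2 ≤ 1 := by linarith
  have hA1 : 0 ≤ 1 - Real.cos a := by nlinarith [Real.cos_le_one a]
  have hA2 : 1 - Real.cos a ≤ φ ^ 2 / 18 := by
    have := Real.one_sub_sq_div_two_le_cos (x := a)
    rw [ha] at this ⊢; nlinarith
  have hB1 : 0 ≤ a - Real.sin a := by nlinarith [Real.sin_lt ha0]
  have hB2 : a - Real.sin a ≤ φ ^ 2 / 108 := by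
    have := Real.sin_gt_sub_cube ha0
    rw [ha] at this ⊢; nlinarith
  have hC1 : 0 ≤ φ / 2 - Real.sin (φ / 2) := by nlinarith [Real.sin_lt hb0]
  have hC2 : φ / 2 - Real.sin (φ / 2) ≤ φ ^ 2 / 32 := by
    have := Real.sin_gt_sub_cube hb0
    nlinarith
  have hcancel : 2 * Real.sqrt 3 * a = (4 / Real.sqrt 3) * (φ / 2) := by
    rw [ha, div_mul_eq_mul_div, eq_div_iff h3pos.ne']
    linear_combination (2 * φ / 3) * h3
  have hE : 4 * Real.cos (a - 4 * π / 3) + 2 + (4 / Real.sqrt 3) * Real.sqrt (x / 2)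
      = 2 * (1 - Real.cos a) + 2 * Real.sqrt 3 * (a - Real.sin a)
        - (4 / Real.sqrt 3) * (φ / 2 - Real.sin (φ / 2)) := by
    have hinv : (Real.sqrt 3)⁻¹ = Real.sqrt 3 / 3 := by
      rw [inv_eq_one_div, div_eq_div_iff h3pos.ne' (by norm_num : (3:ℝ) ≠ 0)]
      linarith [h3]
    rw [hsplit, ← hs2]
    simp only [div_eq_mul_inv, hinv]
    linear_combination (2 * Real.sqrt 3) * ha
  rw [hE]
  have hk : (4 / Real.sqrt 3) ≤ 3 := by
    rw [div_le_iff₀ h3pos]; nlinarith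
  have hk0 : (0:ℝ) ≤ 4 / Real.sqrt 3 := by positivity
  have hs3le : Real.sqrt 3 ≤ 2 := by nlinarith
  rw [abs_le]
  constructor
  · nlinarith [mul_le_mul hk hC2 hC1 (by norm_num : (0:ℝ) ≤ 3),
      mul_nonneg h3pos.le hB1]
  · nlinarith [mul_le_mul hs3le hB2 hB1 (by norm_num : (0:ℝ) ≤ 2),
      mul_nonneg hk0 hC1]

/-- Large-`s` expansion of the Viète branch `V₂`: for `q ∈ [-6, -4)` and
`β = 32/((2 - q)(4 + q)²)`, `V₂(s) + 2 + √(16/(3β)) s⁻³ = O(s⁻⁶)` as `s → ∞`;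
in particular `V₂(s) → -2`. -/
theorem stmt_13 (q : ℝ) (hq : q ∈ Set.Ico (-6 : ℝ) (-4))
    (β : ℝ) (hβ : β = 32 / ((2 - q) * (4 + q) ^ 2))
    (V₂ : ℝ → ℝ)
    (hV : ∀ s : ℝ, 1 ≤ s →
      V₂ s = 4 * Real.cos (Real.arccos (1 - 2 / (s ^ 6 * β)) / 3 - 4 * Real.pi / 3)) :
    ((fun s : ℝ => V₂ s + 2 + Real.sqrt (16 / (3 * β)) * s ^ (-3 : ℤ))
        =O[Filter.atTop] fun s : ℝ => s ^ (-6 : ℤ)) ∧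
    Filter.Tendsto V₂ Filter.atTop (nhds (-2)) := by
  obtain ⟨hq1, hq2⟩ := hq
  have hden : 0 < (2 - q) * (4 + q) ^ 2 := by nlinarith [sq_nonneg (4 + q)]
  have hβpos : 0 < β := by rw [hβ]; exact div_pos (by norm_num) hden
  have hsβ : 0 < Real.sqrt β := Real.sqrt_pos.2 hβpos
  have h3pos : (0:ℝ) < Real.sqrt 3 := Real.sqrt_pos.2 (by norm_num)
  have hKeq : Real.sqrt (16 / (3 * β)) = 4 / (Real.sqrt 3 * Real.sqrt β) := by
    have e1 : (16:ℝ) / (3 * β) = (4 / (Real.sqrt 3 * Real.sqrt β)) ^ 2 := by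
      rw [div_pow, mul_pow, Real.sq_sqrt (by norm_num : (0:ℝ) ≤ 3), Real.sq_sqrt hβpos.le]
      norm_num
    rw [e1, Real.sqrt_sq (by positivity)]
  -- eventual bound
  have hev : ∀ᶠ s in atTop, ‖V₂ s + 2 + Real.sqrt (16 / (3 * β)) * s ^ (-3 : ℤ)‖
      ≤ (4 / β) * ‖(s : ℝ) ^ (-6 : ℤ)‖ := by
    filter_upwards [eventually_ge_atTop (max 1 (16 / β))] with s hs
    have hs1 : (1:ℝ) ≤ s := le_trans (le_max_left _ _) hs
    have hs0 : (0:ℝ) < s := by linarith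
    have hs16 : 16 / β ≤ s := le_trans (le_max_right _ _) hs
    have hs6 : s ≤ s ^ 6 := le_self_pow₀ hs1 (by norm_num)
    have h16 : 16 ≤ s ^ 6 * β := by
      have h1 : 16 ≤ s * β := by
        have := mul_le_mul_of_nonneg_right hs16 hβpos.le
        rwa [div_mul_cancel₀ _ hβpos.ne'] at this
      nlinarith
    set x : ℝ := 2 / (s ^ 6 * β) with hxdef
    have hs6pos : 0 < s ^ 6 * β := by positivity
    have hx0 : 0 < x := by positivity
    have hxle : x ≤ 1 / 8 := by
      rw [hxdef, div_le_div_iff₀ hs6pos (by norm_num)]; linarith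
    have hkey := key_aux x hx0 hxle
    -- rewrite V₂
    have hV2 : V₂ s = 4 * Real.cos (Real.arccos (1 - x) / 3 - 4 * Real.pi / 3) := hV s hs1
    -- rewrite the correction term
    have hs3 : Real.sqrt (s ^ 6 * β) = s ^ 3 * Real.sqrt β := by
      rw [show s ^ 6 * β = (s ^ 3) ^ 2 * β by ring, Real.sqrt_mul (by positivity),
        Real.sqrt_sq (by positivity)]
    have hxhalf : Real.sqrt (x / 2) = 1 / (s ^ 3 * Real.sqrt β) := by
      rw [hxdef, show 2 / (s ^ 6 * β) / 2 = (s ^ 6 * β)⁻¹ by field_simp,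
        Real.sqrt_inv, hs3, one_div]
    have hzpow3 : (s : ℝ) ^ (-3 : ℤ) = (s ^ 3)⁻¹ := by
      rw [zpow_neg]; norm_cast
    have hzpow6 : (s : ℝ) ^ (-6 : ℤ) = (s ^ 6)⁻¹ := by
      rw [zpow_neg]; norm_cast
    have hcorr : Real.sqrt (16 / (3 * β)) * s ^ (-3 : ℤ)
        = (4 / Real.sqrt 3) * Real.sqrt (x / 2) := by
      rw [hKeq, hxhalf, hzpow3]
      field_simp
    have h2x : 2 * x = (4 / β) * ‖(s : ℝ) ^ (-6 : ℤ)‖ := by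
      rw [hzpow6, Real.norm_eq_abs, abs_of_pos (by positivity), hxdef]
      field_simp; ring
    rw [Real.norm_eq_abs, hV2, hcorr, ← h2x]
    exact hkey
  have hbig : (fun s : ℝ => V₂ s + 2 + Real.sqrt (16 / (3 * β)) * s ^ (-3 : ℤ))
      =O[Filter.atTop] fun s : ℝ => s ^ (-6 : ℤ) := by
    rw [isBigO_iff]; exact ⟨4 / β, hev⟩
  refine ⟨hbig, ?_⟩
  have h6 : Tendsto (fun s : ℝ => s ^ (-6 : ℤ)) atTop (nhds 0) :=
    tendsto_zpow_atTop_zero (by norm_num)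
  have hE0 : Tendsto (fun s : ℝ => V₂ s + 2 + Real.sqrt (16 / (3 * β)) * s ^ (-3 : ℤ))
      atTop (nhds 0) := hbig.trans_tendsto h6
  have h3' : Tendsto (fun s : ℝ => Real.sqrt (16 / (3 * β)) * s ^ (-3 : ℤ)) atTop (nhds 0) := by
    have := (tendsto_zpow_atTop_zero (show (-3:ℤ) < 0 by norm_num)).const_mul
      (Real.sqrt (16 / (3 * β)))
    simpa using this
  have htend := (hE0.sub h3').sub_const 2
  have hfin : Tendsto V₂ atTop (nhds (0 - 0 - 2)) := htend.congr (fun s => by ring)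
  simpa using hfin
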